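/- For neighboring databases in LabelBoostProcedure, the exponential-mechanism weights are comparable: if H₁ and H₂ are hypothesis sets such that for every z in a common index set, H₁ contains at most two hypotheses h_{1,z}, h'_{1,z} and H₂ at most two h_{2,z}, h'_{2,z}, with |q(S₁, h) − q(S₂, h')| ≤ 1 for every pair h ∈ {h_{1,z}, h'_{1,z}}, h' ∈ {h_{2,z}, h'_{2,z}} and |q(S_i,h_{i,z}) − q(S_i,h'_{i,z})| ≤ 1, then the probability w_{1,z} that the exponential mechanism (ε=1) on (H₁, S₁) outputs a hypothesis in {h_{1,z}, h'_{1,z}} satisfies w_{1,z} ≤ 4e·w_{2,z}. -/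
import Mathlib


/-- For neighboring databases in LabelBoostProcedure, the exponential-mechanism
weights of corresponding pairs of hypotheses are comparable:
`w_{1,z} ≤ 4e · w_{2,z}`. -/
theorem stmt17 {Hyp Z : Type*} [DecidableEq Hyp] [Fintype Z]
    (H1 H2 : Finset Hyp) (q1 q2 : Hyp → ℝ)
    (h1 h1' h2 h2' : Z → Hyp)
    (hH1 : H1 = Finset.univ.biUnion (fun z => {h1 z, h1' z}))
    (hH2 : H2 = Finset.univ.biUnion (fun z => {h2 z, h2' z}))
    (hdisj1 : ∀ z z' : Z, z ≠ z' →
      Disjoint ({h1 z, h1' z} : Finset Hyp) ({h1 z', h1' z'} : Finset Hyp))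
    (hdisj2 : ∀ z z' : Z, z ≠ z' →
      Disjoint ({h2 z, h2' z} : Finset Hyp) ({h2 z', h2' z'} : Finset Hyp))
    (hq1 : ∀ z, |q1 (h1 z) - q1 (h1' z)| ≤ 1)
    (hq2 : ∀ z, |q2 (h2 z) - q2 (h2' z)| ≤ 1)
    (hcross : ∀ z, ∀ f ∈ ({h1 z, h1' z} : Finset Hyp),
      ∀ g ∈ ({h2 z, h2' z} : Finset Hyp), |q1 f - q2 g| ≤ 1) :
    ∀ z : Z,
      (∑ f ∈ ({h1 z, h1' z} : Finset Hyp), Real.exp (q1 f / 2)) /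
          (∑ f ∈ H1, Real.exp (q1 f / 2))
        ≤ 4 * Real.exp 1 *
          ((∑ f ∈ ({h2 z, h2' z} : Finset Hyp), Real.exp (q2 f / 2)) /
            (∑ f ∈ H2, Real.exp (q2 f / 2))) := by
  intro z
  set E : ℝ := Real.exp (1/2) with hE
  have hEpos : 0 < E := Real.exp_pos _
  have hE2 : E * E = Real.exp 1 := by
    rw [hE, ← Real.exp_add]; norm_num
  -- pair bound, direction 1
  have pairbd1 : ∀ w : Z,
      (∑ f ∈ ({h1 w, h1' w} : Finset Hyp), Real.exp (q1 f / 2))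
        ≤ 2 * E * ∑ g ∈ ({h2 w, h2' w} : Finset Hyp), Real.exp (q2 g / 2) := by
    intro w
    have hterm : ∀ f ∈ ({h1 w, h1' w} : Finset Hyp),
        Real.exp (q1 f / 2) ≤ E * Real.exp (q2 (h2 w) / 2) := by
      intro f hf
      have hc := hcross w f hf (h2 w) (by simp)
      have := abs_le.mp hc
      rw [hE, ← Real.exp_add]
      exact Real.exp_le_exp.mpr (by linarith)
    calc (∑ f ∈ ({h1 w, h1' w} : Finset Hyp), Real.exp (q1 f / 2))
        ≤ ∑ _f ∈ ({h1 w, h1' w} : Finset Hyp), E * Real.exp (q2 (h2 w) / 2) :=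
          Finset.sum_le_sum hterm
      _ = (({h1 w, h1' w} : Finset Hyp).card : ℝ) * (E * Real.exp (q2 (h2 w) / 2)) := by
          rw [Finset.sum_const, nsmul_eq_mul]
      _ ≤ 2 * (E * Real.exp (q2 (h2 w) / 2)) := by
          apply mul_le_mul_of_nonneg_right
          · exact_mod_cast (Finset.card_insert_le _ _).trans (by rw [Finset.card_singleton])
          · positivity
      _ ≤ 2 * E * ∑ g ∈ ({h2 w, h2' w} : Finset Hyp), Real.exp (q2 g / 2) := by
          rw [mul_assoc]
          apply mul_le_mul_of_nonneg_left _ (by norm_num)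
          apply mul_le_mul_of_nonneg_left _ hEpos.le
          exact Finset.single_le_sum (f := fun f => Real.exp (q2 f / 2)) (fun g _ => (Real.exp_pos _).le) (Finset.mem_insert_self _ _)
  -- pair bound, direction 2
  have pairbd2 : ∀ w : Z,
      (∑ g ∈ ({h2 w, h2' w} : Finset Hyp), Real.exp (q2 g / 2))
        ≤ 2 * E * ∑ f ∈ ({h1 w, h1' w} : Finset Hyp), Real.exp (q1 f / 2) := by
    intro w
    have hterm : ∀ g ∈ ({h2 w, h2' w} : Finset Hyp),
        Real.exp (q2 g / 2) ≤ E * Real.exp (q1 (h1 w) / 2) := by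
      intro g hg
      have hc := hcross w (h1 w) (by simp) g hg
      have := abs_le.mp hc
      rw [hE, ← Real.exp_add]
      exact Real.exp_le_exp.mpr (by linarith)
    calc (∑ g ∈ ({h2 w, h2' w} : Finset Hyp), Real.exp (q2 g / 2))
        ≤ ∑ _g ∈ ({h2 w, h2' w} : Finset Hyp), E * Real.exp (q1 (h1 w) / 2) :=
          Finset.sum_le_sum hterm
      _ = (({h2 w, h2' w} : Finset Hyp).card : ℝ) * (E * Real.exp (q1 (h1 w) / 2)) := by
          rw [Finset.sum_const, nsmul_eq_mul]
      _ ≤ 2 * (E * Real.exp (q1 (h1 w) / 2)) := by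
          apply mul_le_mul_of_nonneg_right
          · exact_mod_cast (Finset.card_insert_le _ _).trans (by rw [Finset.card_singleton])
          · positivity
      _ ≤ 2 * E * ∑ f ∈ ({h1 w, h1' w} : Finset Hyp), Real.exp (q1 f / 2) := by
          rw [mul_assoc]
          apply mul_le_mul_of_nonneg_left _ (by norm_num)
          apply mul_le_mul_of_nonneg_left _ hEpos.le
          exact Finset.single_le_sum (f := fun f => Real.exp (q1 f / 2)) (fun g _ => (Real.exp_pos _).le) (Finset.mem_insert_self _ _)
  -- denominators as sums over z
  have hD1 : (∑ f ∈ H1, Real.exp (q1 f / 2))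
      = ∑ w : Z, ∑ f ∈ ({h1 w, h1' w} : Finset Hyp), Real.exp (q1 f / 2) := by
    rw [hH1]
    exact Finset.sum_biUnion (fun a _ b _ hab => hdisj1 a b hab)
  have hD2 : (∑ f ∈ H2, Real.exp (q2 f / 2))
      = ∑ w : Z, ∑ f ∈ ({h2 w, h2' w} : Finset Hyp), Real.exp (q2 f / 2) := by
    rw [hH2]
    exact Finset.sum_biUnion (fun a _ b _ hab => hdisj2 a b hab)
  have hD1pos : 0 < ∑ f ∈ H1, Real.exp (q1 f / 2) := by
    apply Finset.sum_pos (fun f _ => Real.exp_pos _)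
    exact ⟨h1 z, by rw [hH1]; exact Finset.mem_biUnion.mpr ⟨z, Finset.mem_univ z, by simp⟩⟩
  have hD2pos : 0 < ∑ f ∈ H2, Real.exp (q2 f / 2) := by
    apply Finset.sum_pos (fun f _ => Real.exp_pos _)
    exact ⟨h2 z, by rw [hH2]; exact Finset.mem_biUnion.mpr ⟨z, Finset.mem_univ z, by simp⟩⟩
  have hDbd : (∑ f ∈ H2, Real.exp (q2 f / 2))
      ≤ 2 * E * ∑ f ∈ H1, Real.exp (q1 f / 2) := by
    rw [hD1, hD2, Finset.mul_sum]
    exact Finset.sum_le_sum (fun w _ => pairbd2 w)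
  set N1 := ∑ f ∈ ({h1 z, h1' z} : Finset Hyp), Real.exp (q1 f / 2)
  set N2 := ∑ f ∈ ({h2 z, h2' z} : Finset Hyp), Real.exp (q2 f / 2)
  set D1 := ∑ f ∈ H1, Real.exp (q1 f / 2)
  set D2 := ∑ f ∈ H2, Real.exp (q2 f / 2)
  have hN1 : N1 ≤ 2 * E * N2 := pairbd1 z
  have hN2pos : 0 ≤ N2 := Finset.sum_nonneg (fun f _ => (Real.exp_pos _).le)
  rw [← mul_div_assoc, div_le_div_iff₀ hD1pos hD2pos]
  have key : N1 * D2 ≤ (2 * E * N2) * (2 * E * D1) :=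
    mul_le_mul hN1 hDbd hD2pos.le (by positivity)
  have key2 : 2 * E * N2 * (2 * E * D1) = 4 * Real.exp 1 * N2 * D1 := by
    rw [← hE2]; ring
  linarith [key]
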